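/- Let G be a weighted graph, θ a theta-graph of parameter r in G, and o a cycle of length at most r containing a branching vertex v of θ. Then at most one θ-bridge included in o is secondary; that is, there cannot be two secondary bridges. -/

import Mathlib

/-!
Common definitions: weighted graphs, weighted lengths of walks, 𝔽₂-generation of cycles,
subdivisions of wheels (with pieces and rim), theta graphs, the classes 𝒲 and 𝒲*,
fans and pre-fans, arcs/bridges/detours of a cycle relative to a theta graph.
-/

open SimpleGraph

namespace LocalWheels

variable {V : Type*} [Fintype V] [DecidableEq V]

/-- The weighted length of a walk: the sum of the weights of its edges. -/
def wlen {G : SimpleGraph V} (wt : Sym2 V → ℕ) {u v : V} (p : G.Walk u v) : ℕ :=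
  (p.edges.map wt).sum

/-- All edges of `G` have positive weight. -/
def WeightPos (G : SimpleGraph V) (wt : Sym2 V → ℕ) : Prop :=
  ∀ e ∈ G.edgeSet, 0 < wt e

/-- `t` is the 𝔽₂-sum (iterated symmetric difference) of finitely many members of `𝒞`. -/
def IsF2Sum (𝒞 : Set (Finset (Sym2 V))) (t : Finset (Sym2 V)) : Prop :=
  ∃ l : List (Finset (Sym2 V)), (∀ s ∈ l, s ∈ 𝒞) ∧ l.foldr symmDiff ∅ = t

/-- The edge sets of the cycles of the subgraph with edge set `E` having weighted length
at most `r`. -/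
def shortCycleEdgeSets (G : SimpleGraph V) (wt : Sym2 V → ℕ) (r : ℕ∞) (E : Set (Sym2 V)) :
    Set (Finset (Sym2 V)) :=
  {t | ∃ (v : V) (c : G.Walk v v), c.IsCycle ∧ (∀ e ∈ c.edges, e ∈ E) ∧
        (wlen wt c : ℕ∞) ≤ r ∧ c.edges.toFinset = t}

/-- Every cycle of the subgraph with edge set `E` is generated (over 𝔽₂) by the cycles of
that subgraph of weighted length at most `r`. -/
def LocallyGenerated (G : SimpleGraph V) (wt : Sym2 V → ℕ) (r : ℕ∞) (E : Set (Sym2 V)) : Prop :=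
  ∀ (v : V) (c : G.Walk v v), c.IsCycle → (∀ e ∈ c.edges, e ∈ E) →
    IsF2Sum (shortCycleEdgeSets G wt r E) c.edges.toFinset

/-- A subdivision of a wheel inside the graph `G`: a center, `n ≥ 3` branch vertices on the
rim, internally disjoint spoke paths from the center to the branch vertices and internally
disjoint rim arcs joining consecutive branch vertices. -/
structure WheelSubdiv (G : SimpleGraph V) where
  n : ℕ
  hn : 3 ≤ n
  center : V
  branch : Fin n → V
  branch_inj : Function.Injective branch
  center_ne : ∀ i, center ≠ branch i
  spoke : (i : Fin n) → G.Walk center (branch i)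
  arc : (i : Fin n) → G.Walk (branch i) (branch (finRotate n i))
  spoke_path : ∀ i, (spoke i).IsPath
  arc_path : ∀ i, (arc i).IsPath
  spoke_spoke : ∀ i j, i ≠ j →
    {x | x ∈ (spoke i).support} ∩ {x | x ∈ (spoke j).support} = {center}
  arc_arc : ∀ i j, i ≠ j →
    {x | x ∈ (arc i).support} ∩ {x | x ∈ (arc j).support} =
      ({branch i, branch (finRotate n i)} ∩ {branch j, branch (finRotate n j)} : Set V)
  spoke_arc : ∀ i j,
    {x | x ∈ (spoke i).support} ∩ {x | x ∈ (arc j).support} =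
      ({center, branch i} ∩ {branch j, branch (finRotate n j)} : Set V)

namespace WheelSubdiv

variable {G : SimpleGraph V}

/-- The vertices of the subdivision of the wheel. -/
def support (W : WheelSubdiv G) : Set V :=
  {x | ∃ i, x ∈ (W.spoke i).support ∨ x ∈ (W.arc i).support}

/-- The edges of the subdivision of the wheel. -/
def edges (W : WheelSubdiv G) : Set (Sym2 V) :=
  {e | ∃ i, e ∈ (W.spoke i).edges ∨ e ∈ (W.arc i).edges}

/-- The `i`-th piece of the subdivision of the wheel: the cycle through the center obtained
from the `i`-th spoke, the `i`-th rim arc and the `(i+1)`-st spoke. -/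
def piece (W : WheelSubdiv G) (i : Fin W.n) : G.Walk W.center W.center :=
  (W.spoke i).append ((W.arc i).append (W.spoke (finRotate W.n i)).reverse)

/-- The weighted length of the `i`-th piece. -/
def pieceLen (W : WheelSubdiv G) (wt : Sym2 V → ℕ) (i : Fin W.n) : ℕ :=
  wlen wt (W.piece i)

/-- The weighted length of the rim. -/
def rimLen (W : WheelSubdiv G) (wt : Sym2 V → ℕ) : ℕ :=
  ∑ i, wlen wt (W.arc i)

/-- The subdivision of the wheel is `r`-bounded: all pieces have length at most `r`. -/
def RBounded (W : WheelSubdiv G) (wt : Sym2 V → ℕ) (r : ℕ∞) : Prop :=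
  ∀ i, (W.pieceLen wt i : ℕ∞) ≤ r

/-- The subdivision of the wheel has an `r`-explicit generating set: all pieces have
length at most `r`, or all pieces except one have length at most `r` and the rim has
length at most `r`. -/
def RExplicit (W : WheelSubdiv G) (wt : Sym2 V → ℕ) (r : ℕ∞) : Prop :=
  (∀ i, (W.pieceLen wt i : ℕ∞) ≤ r) ∨
    ((∃ i₀, ∀ i, i ≠ i₀ → (W.pieceLen wt i : ℕ∞) ≤ r) ∧ (W.rimLen wt : ℕ∞) ≤ r)

/-- The subdivision of the wheel is `r`-local: its cycles of length at most `r` generate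
all its cycles. -/
def RLocal (W : WheelSubdiv G) (wt : Sym2 V → ℕ) (r : ℕ∞) : Prop :=
  LocallyGenerated G wt r W.edges

end WheelSubdiv

/-- A theta graph of parameter `r` inside `G`: two branching vertices joined by three
internally disjoint paths (its arms) such that at least two of the three cycles formed by
unions of pairs of arms have weighted length at most `r`. -/
structure Theta (G : SimpleGraph V) (wt : Sym2 V → ℕ) (r : ℕ∞) where
  v : V
  w : V
  hvw : v ≠ w
  arm : Fin 3 → G.Walk v w
  arm_path : ∀ i, (arm i).IsPath
  arm_inter : ∀ i j, i ≠ j →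
    {x | x ∈ (arm i).support} ∩ {x | x ∈ (arm j).support} = {v, w}
  arm_ne : ∀ i j, i ≠ j → (arm i).edges ≠ (arm j).edges
  param : ∃ i j k : Fin 3, i ≠ j ∧ i ≠ k ∧ j ≠ k ∧
    ((wlen wt (arm i) + wlen wt (arm j) : ℕ) : ℕ∞) ≤ r ∧
    ((wlen wt (arm i) + wlen wt (arm k) : ℕ) : ℕ∞) ≤ r

namespace Theta

variable {G : SimpleGraph V} {wt : Sym2 V → ℕ} {r : ℕ∞}

/-- The vertices of the theta graph. -/
def support (θ : Theta G wt r) : Set V := {x | ∃ i, x ∈ (θ.arm i).support}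

/-- The edges of the theta graph. -/
def edges (θ : Theta G wt r) : Set (Sym2 V) := {e | ∃ i, e ∈ (θ.arm i).edges}

/-- `x` is an interior vertex of the `i`-th arm. -/
def interior (θ : Theta G wt r) (i : Fin 3) (x : V) : Prop :=
  x ∈ (θ.arm i).support ∧ x ≠ θ.v ∧ x ≠ θ.w

/-- `x` is a branching vertex of the theta graph. -/
def IsBranch (θ : Theta G wt r) (x : V) : Prop := x = θ.v ∨ x = θ.w

end Theta

/-- `p` lies strictly between `x` and `y` on the path `A`. -/
def StrictlyBetween {G : SimpleGraph V} {u₀ w₀ : V} (A : G.Walk u₀ w₀) (p x y : V)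
    (hp : p ∈ A.support) : Prop :=
  p ≠ x ∧ p ≠ y ∧
    ((x ∈ (A.takeUntil p hp).support ∧ y ∈ (A.dropUntil p hp).support) ∨
     (y ∈ (A.takeUntil p hp).support ∧ x ∈ (A.dropUntil p hp).support))

/-- The subgraph of `G` with vertex set `S` and edge set `E` belongs to the class `𝒲`:
it is obtained from a theta graph of parameter `r` by attaching a path `P` at interior
vertices of two different arms, in such a way that it contains a cycle of length at most
`r` including `P`. -/
def InW (G : SimpleGraph V) (wt : Sym2 V → ℕ) (r : ℕ∞) (S : Set V) (E : Set (Sym2 V)) :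
    Prop :=
  ∃ (θ : Theta G wt r) (i j : Fin 3) (p₁ p₂ : V) (P : G.Walk p₁ p₂),
    i ≠ j ∧ θ.interior i p₁ ∧ θ.interior j p₂ ∧ P.IsPath ∧
    {x | x ∈ P.support} ∩ θ.support = {p₁, p₂} ∧
    S = θ.support ∪ {x | x ∈ P.support} ∧
    E = θ.edges ∪ {e | e ∈ P.edges} ∧
    ∃ (u : V) (c : G.Walk u u), c.IsCycle ∧ (∀ e ∈ c.edges, e ∈ E) ∧
      ((wlen wt c : ℕ) : ℕ∞) ≤ r ∧ ∀ e ∈ P.edges, e ∈ c.edges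

/-- The subgraph of `G` with vertex set `S` and edge set `E` belongs to the class `𝒲*`:
it is obtained from a theta graph of parameter `r` by attaching a path `P` at interior
vertices of two different arms and a path `Q` at a branching vertex and an interior vertex
of an arm that also contains an endvertex of `P`, that endvertex of `P` lying strictly
between the two endvertices of `Q` on that arm, in such a way that it contains a cycle of
length at most `r` including both `P` and `Q`. -/
def InWStar (G : SimpleGraph V) (wt : Sym2 V → ℕ) (r : ℕ∞) (S : Set V) (E : Set (Sym2 V)) :
    Prop :=
  ∃ (θ : Theta G wt r) (i j : Fin 3) (p₁ p₂ : V) (P : G.Walk p₁ p₂),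
    i ≠ j ∧ θ.interior i p₁ ∧ θ.interior j p₂ ∧ P.IsPath ∧
    {x | x ∈ P.support} ∩ θ.support = {p₁, p₂} ∧
    ∃ (b q : V) (k : Fin 3) (Q : G.Walk b q),
      θ.IsBranch b ∧ θ.interior k q ∧ Q.IsPath ∧
      {x | x ∈ Q.support} ∩ (θ.support ∪ {x | x ∈ P.support}) = {b, q} ∧
      (∃ (p : V) (hp : p ∈ (θ.arm k).support), (p = p₁ ∨ p = p₂) ∧
        StrictlyBetween (θ.arm k) p b q hp) ∧
      S = θ.support ∪ {x | x ∈ P.support} ∪ {x | x ∈ Q.support} ∧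
      E = θ.edges ∪ {e | e ∈ P.edges} ∪ {e | e ∈ Q.edges} ∧
      ∃ (u : V) (c : G.Walk u u), c.IsCycle ∧ (∀ e ∈ c.edges, e ∈ E) ∧
        ((wlen wt c : ℕ) : ℕ∞) ≤ r ∧ (∀ e ∈ P.edges, e ∈ c.edges) ∧
        ∀ e ∈ Q.edges, e ∈ c.edges

/-- `Q` is a subpath of the cycle `o`: a path all of whose edges are edges of `o`. -/
def IsSubpathOf {G : SimpleGraph V} {a b u : V} (Q : G.Walk a b) (o : G.Walk u u) : Prop :=
  Q.IsPath ∧ ∀ e ∈ Q.edges, e ∈ o.edges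

namespace Theta

variable {G : SimpleGraph V} {wt : Sym2 V → ℕ} {r : ℕ∞}

/-- `Q` is an arc of the cycle `o` relative to the theta graph `θ`: a nontrivial subpath
of `o` meeting `θ` exactly in its two endvertices. -/
def IsArc (θ : Theta G wt r) {u a b : V} (o : G.Walk u u) (Q : G.Walk a b) : Prop :=
  IsSubpathOf Q o ∧ 0 < Q.length ∧ a ∈ θ.support ∧ b ∈ θ.support ∧
    ∀ x ∈ Q.support, x ≠ a → x ≠ b → x ∉ θ.support

/-- `Q` is a `θ`-bridge of `o`: an arc whose endvertices are interior vertices of two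
different arms of `θ`. -/
def IsBridgeArc (θ : Theta G wt r) {u a b : V} (o : G.Walk u u) (Q : G.Walk a b) : Prop :=
  θ.IsArc o Q ∧ ∃ i j : Fin 3, i ≠ j ∧ θ.interior i a ∧ θ.interior j b

/-- `Q` is a `θ`-detour of `o`: an arc that is not a bridge. -/
def IsDetourArc (θ : Theta G wt r) {u a b : V} (o : G.Walk u u) (Q : G.Walk a b) : Prop :=
  θ.IsArc o Q ∧ ¬ ∃ i j : Fin 3, i ≠ j ∧ θ.interior i a ∧ θ.interior j b

/-- The arc `R` is strongly adjacent to the arc `S`: some subpath `X` of `o` joins an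
endvertex of `R` to an endvertex of `S`, contains no internal vertex of any arc, and the
endvertex of `R` on `X` is not a branching vertex of `θ`. -/
def StronglyAdj (θ : Theta G wt r) {u r₁ r₂ s₁ s₂ : V} (o : G.Walk u u)
    (R : G.Walk r₁ r₂) (S : G.Walk s₁ s₂) : Prop :=
  ∃ (x y : V) (X : G.Walk x y), (x = r₁ ∨ x = r₂) ∧ (y = s₁ ∨ y = s₂) ∧
    IsSubpathOf X o ∧
    (∀ z ∈ X.support, ∀ (a b : V) (Q : G.Walk a b), θ.IsArc o Q → z ∈ Q.support →
      z = a ∨ z = b) ∧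
    ¬ θ.IsBranch x ∧ R.length = R.length ∧ S.length = S.length

/-- The bridge `Q` is primary (relative to the branching vertex `vb` on `o`): it has an
endvertex `x` such that a shortest path from `x` to `vb` within the cycle `o` includes `Q`. -/
def PrimaryBridge (θ : Theta G wt r) {u a b : V} (o : G.Walk u u) (vb : V)
    (Q : G.Walk a b) : Prop :=
  ∃ x : V, (x = a ∨ x = b) ∧ ∃ S : G.Walk x vb, IsSubpathOf S o ∧
    (∀ S' : G.Walk x vb, IsSubpathOf S' o → wlen wt S ≤ wlen wt S') ∧
    ∀ e ∈ Q.edges, e ∈ S.edges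

end Theta

/-- Common data of fans and pre-fans of parameter `r` centered at `v`: a nonempty sequence
of (oriented) cycles through `v`, each of weighted length at most `r`. -/
structure FanSeq (G : SimpleGraph V) (wt : Sym2 V → ℕ) (r : ℕ∞) (v : V) where
  n : ℕ
  hn : 0 < n
  piece : Fin n → G.Walk v v
  piece_cycle : ∀ i, (piece i).IsCycle
  piece_len : ∀ i, (wlen wt (piece i) : ℕ∞) ≤ r

namespace FanSeq

variable {G : SimpleGraph V} {wt : Sym2 V → ℕ} {r : ℕ∞} {v : V}

/-- The index of the first piece. -/
def first (F : FanSeq G wt r v) : Fin F.n := ⟨0, F.hn⟩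

/-- The index of the last piece. -/
def last (F : FanSeq G wt r v) : Fin F.n := ⟨F.n - 1, Nat.sub_lt F.hn Nat.one_pos⟩

/-- The start of the pre-fan: the edge of the first cycle immediately before `v`. -/
def preStart (F : FanSeq G wt r v) : Sym2 V :=
  s((F.piece F.first).reverse.getVert 1, v)

/-- The end of the pre-fan: the edge of the last cycle immediately after `v`. -/
def preEnd (F : FanSeq G wt r v) : Sym2 V :=
  s(v, (F.piece F.last).getVert 1)

/-- The start of the fan: the first edge of the first cycle. -/
def fanStart (F : FanSeq G wt r v) : Sym2 V :=
  s(v, (F.piece F.first).getVert 1)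

/-- The end of the fan: the last edge of the last cycle. -/
def fanEnd (F : FanSeq G wt r v) : Sym2 V :=
  s((F.piece F.last).reverse.getVert 1, v)

/-- The edges of (the union of the pieces of) the fan. -/
def edges (F : FanSeq G wt r v) : Set (Sym2 V) := {e | ∃ i, e ∈ (F.piece i).edges}

/-- The pre-fan condition: the vertex just after `v` on a piece equals the vertex just
before `v` on the next piece. -/
def IsPreFan (F : FanSeq G wt r v) : Prop :=
  ∀ (i : ℕ) (h : i + 1 < F.n),
    (F.piece ⟨i, Nat.lt_of_succ_lt h⟩).getVert 1 =
      (F.piece ⟨i + 1, h⟩).reverse.getVert 1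

/-- The fan condition: pieces at distance at least two meet exactly in `v`, and each piece
has the form `v Lᵢ Mᵢ Rᵢ v` where `Rᵢ = L_{i+1}` is exactly the intersection of consecutive
pieces. -/
def IsFan (F : FanSeq G wt r v) : Prop :=
  (∀ i j : Fin F.n, 2 ≤ |((i : ℕ) : ℤ) - ((j : ℕ) : ℤ)| →
      {x | x ∈ (F.piece i).support} ∩ {x | x ∈ (F.piece j).support} = {v}) ∧
  ∀ (i : ℕ) (h : i + 1 < F.n),
    ∃ (x : V) (hx : x ∈ (F.piece ⟨i, Nat.lt_of_succ_lt h⟩).support)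
      (hx' : x ∈ (F.piece ⟨i + 1, h⟩).support),
      (F.piece ⟨i, Nat.lt_of_succ_lt h⟩).dropUntil x hx =
        ((F.piece ⟨i + 1, h⟩).takeUntil x hx').reverse ∧
      {y | y ∈ (F.piece ⟨i, Nat.lt_of_succ_lt h⟩).support} ∩
          {y | y ∈ (F.piece ⟨i + 1, h⟩).support} =
        {y | y ∈ ((F.piece ⟨i, Nat.lt_of_succ_lt h⟩).dropUntil x hx).support}

end FanSeq

set_option linter.unusedSectionVars false
set_option linter.unusedVariables false
namespace Aux
variable {V : Type*} [DecidableEq V] {G : SimpleGraph V}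
open SimpleGraph.Walk

lemma takeUntil_start {u v : V} (p : G.Walk u v) (h : u ∈ p.support) :
    p.takeUntil u h = Walk.nil := by
  cases p <;> simp [Walk.takeUntil]

lemma dropUntil_start {u v : V} (p : G.Walk u v) (h : u ∈ p.support) :
    p.dropUntil u h = p := by
  cases p <;> simp [Walk.dropUntil]

lemma takeUntil_cons_of_ne {u v w x : V} (r : G.Adj u v) (p : G.Walk v w)
    (h : x ∈ (Walk.cons r p).support) (hne : u ≠ x) (hx : x ∈ p.support) :
    (Walk.cons r p).takeUntil x h = Walk.cons r (p.takeUntil x hx) := by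
  simp [Walk.takeUntil, hne]

lemma dropUntil_cons_of_ne {u v w x : V} (r : G.Adj u v) (p : G.Walk v w)
    (h : x ∈ (Walk.cons r p).support) (hne : u ≠ x) (hx : x ∈ p.support) :
    (Walk.cons r p).dropUntil x h = p.dropUntil x hx := by
  simp [Walk.dropUntil, hne]

lemma takeUntil_congr {u v x : V} {p q : G.Walk u v} (h : p = q) (hx : x ∈ p.support) :
    p.takeUntil x hx = q.takeUntil x (h ▸ hx) := by subst h; rfl

lemma dropUntil_congr {u v x : V} {p q : G.Walk u v} (h : p = q) (hx : x ∈ p.support) :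
    p.dropUntil x hx = q.dropUntil x (h ▸ hx) := by subst h; rfl

lemma takeUntil_append_left {u v w x : V} (p : G.Walk u v) (q : G.Walk v w)
    (hx : x ∈ p.support) (h : x ∈ (p.append q).support) :
    (p.append q).takeUntil x h = p.takeUntil x hx := by
  induction p with
  | nil =>
    have hxu := (Walk.mem_support_nil_iff).1 hx
    subst hxu
    exact (takeUntil_start q h).trans (takeUntil_start Walk.nil hx).symm
  | @cons a b c r p ih =>
    by_cases hax : a = x
    · subst hax
      rw [takeUntil_start, takeUntil_start]
    · have hx' : x ∈ p.support := by
        rcases List.mem_cons.1 (Walk.support_cons r p ▸ hx) with h1 | h1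
        · exact absurd h1.symm hax
        · exact h1
      have h' : x ∈ (p.append q).support := by
        rw [Walk.mem_support_append_iff]; exact Or.inl hx'
      have : ((Walk.cons r p).append q).takeUntil x h
          = (Walk.cons r (p.append q)).takeUntil x (by rw [← Walk.cons_append]; exact h) := by
        exact takeUntil_congr (Walk.cons_append r p q) h
      rw [this, takeUntil_cons_of_ne r (p.append q) _ hax h',
        takeUntil_cons_of_ne r p _ hax hx', ih q hx' h']

lemma dropUntil_append_left {u v w x : V} (p : G.Walk u v) (q : G.Walk v w)
    (hx : x ∈ p.support) (h : x ∈ (p.append q).support) :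
    (p.append q).dropUntil x h = (p.dropUntil x hx).append q := by
  induction p with
  | nil =>
    have hxu := (Walk.mem_support_nil_iff).1 hx
    subst hxu
    refine (dropUntil_start q h).trans ?_
    rw [dropUntil_start, Walk.nil_append]
  | @cons a b c r p ih =>
    by_cases hax : a = x
    · subst hax
      rw [dropUntil_start, dropUntil_start, Walk.cons_append]
    · have hx' : x ∈ p.support := by
        rcases List.mem_cons.1 (Walk.support_cons r p ▸ hx) with h1 | h1
        · exact absurd h1.symm hax
        · exact h1
      have h' : x ∈ (p.append q).support := by
        rw [Walk.mem_support_append_iff]; exact Or.inl hx'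
      have : ((Walk.cons r p).append q).dropUntil x h
          = (Walk.cons r (p.append q)).dropUntil x (by rw [← Walk.cons_append]; exact h) := by
        exact dropUntil_congr (Walk.cons_append r p q) h
      rw [this, dropUntil_cons_of_ne r (p.append q) _ hax h',
        dropUntil_cons_of_ne r p _ hax hx', ih q hx' h']

lemma takeUntil_append_right {u v w x : V} (p : G.Walk u v) (q : G.Walk v w)
    (hnx : x ∉ p.support) (hx : x ∈ q.support) (h : x ∈ (p.append q).support) :
    (p.append q).takeUntil x h = p.append (q.takeUntil x hx) := by
  induction p with
  | nil =>
    exact (takeUntil_congr (Walk.nil_append q) h).trans (Walk.nil_append _).symm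
  | @cons a b c r p ih =>
    have hax : a ≠ x := fun hh => hnx (hh ▸ Walk.start_mem_support _)
    have hnx' : x ∉ p.support := fun hh => hnx (by
      rw [Walk.support_cons]; exact List.mem_cons_of_mem _ hh)
    have h' : x ∈ (p.append q).support := by
      rw [Walk.mem_support_append_iff]; exact Or.inr hx
    have e1 : ((Walk.cons r p).append q).takeUntil x h
        = (Walk.cons r (p.append q)).takeUntil x (by rw [← Walk.cons_append]; exact h) :=
      takeUntil_congr (Walk.cons_append r p q) h
    rw [e1, takeUntil_cons_of_ne r (p.append q) _ hax h', ih q hnx' hx h', Walk.cons_append]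

lemma dropUntil_append_right {u v w x : V} (p : G.Walk u v) (q : G.Walk v w)
    (hnx : x ∉ p.support) (hx : x ∈ q.support) (h : x ∈ (p.append q).support) :
    (p.append q).dropUntil x h = q.dropUntil x hx := by
  induction p with
  | nil =>
    exact dropUntil_congr (Walk.nil_append q) h
  | @cons a b c r p ih =>
    have hax : a ≠ x := fun hh => hnx (hh ▸ Walk.start_mem_support _)
    have hnx' : x ∉ p.support := fun hh => hnx (by
      rw [Walk.support_cons]; exact List.mem_cons_of_mem _ hh)
    have h' : x ∈ (p.append q).support := by
      rw [Walk.mem_support_append_iff]; exact Or.inr hx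
    have e1 : ((Walk.cons r p).append q).dropUntil x h
        = (Walk.cons r (p.append q)).dropUntil x (by rw [← Walk.cons_append]; exact h) :=
      dropUntil_congr (Walk.cons_append r p q) h
    rw [e1, dropUntil_cons_of_ne r (p.append q) _ hax h', ih q hnx' hx h']

lemma takeUntil_end {u v : V} (p : G.Walk u v) (hp : p.IsPath) (h : v ∈ p.support) :
    p.takeUntil v h = p := by
  induction p with
  | nil => exact takeUntil_start _ _
  | @cons a b c r p ih =>
    have hac : a ≠ c := by
      intro hh; subst hh
      exact ((Walk.cons_isPath_iff r p).1 hp).2 (Walk.end_mem_support p)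
    rw [takeUntil_cons_of_ne r p _ hac (Walk.end_mem_support p),
      ih hp.of_cons (Walk.end_mem_support p)]

lemma dropUntil_end {u v : V} (p : G.Walk u v) (hp : p.IsPath) (h : v ∈ p.support) :
    p.dropUntil v h = Walk.nil := by
  induction p with
  | nil => exact dropUntil_start _ _
  | @cons a b c r p ih =>
    have hac : a ≠ c := by
      intro hh; subst hh
      exact ((Walk.cons_isPath_iff r p).1 hp).2 (Walk.end_mem_support p)
    rw [dropUntil_cons_of_ne r p _ hac (Walk.end_mem_support p),
      ih hp.of_cons (Walk.end_mem_support p)]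


def wlen' {G : SimpleGraph V} (wt : Sym2 V → ℕ) {u v : V} (p : G.Walk u v) : ℕ :=
  (p.edges.map wt).sum

variable {wt : Sym2 V → ℕ} {x : V}

lemma wlen'_append {u v w : V} (p : G.Walk u v) (q : G.Walk v w) :
    wlen' wt (p.append q) = wlen' wt p + wlen' wt q := by
  simp [wlen', Walk.edges_append]

lemma wlen'_def {u v : V} (p : G.Walk u v) : wlen' wt p = (p.edges.map wt).sum := rfl

lemma wlen'_reverse {u v : V} (p : G.Walk u v) : wlen' wt p.reverse = wlen' wt p := by
  rw [wlen'_def, wlen'_def, Walk.edges_reverse, List.map_reverse, List.sum_reverse]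

lemma wlen'_congr {u v u' v' : V} {p : G.Walk u v} {q : G.Walk u' v'}
    (hp : p.edges.Nodup) (hq : q.edges.Nodup) (h : p.edges.toFinset = q.edges.toFinset) :
    wlen' wt p = wlen' wt q := by
  have := List.perm_of_nodup_nodup_toFinset_eq hp hq h
  exact (this.map wt).sum_eq

lemma eq_of_wlen'_zero {G : SimpleGraph V} {wt : Sym2 V → ℕ} (hw : ∀ e ∈ G.edgeSet, 0 < wt e)
    {u v : V} (p : G.Walk u v) (h : wlen' wt p = 0) : u = v := by
  cases p with
  | nil => rfl
  | @cons u y v r q =>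
    exfalso
    have h1 : 0 < wt s(u, y) :=
      hw _ (Walk.edges_subset_edgeSet (Walk.cons r q) (by simp [Walk.edges_cons]))
    have h2 : wlen' wt (Walk.cons r q) = wt s(u, y) + wlen' wt q := by
      simp [wlen', Walk.edges_cons]
    omega

lemma mem_support_append_left {u v w x : V} {p : G.Walk u v} (q : G.Walk v w)
    (hx : x ∈ p.support) : x ∈ (p.append q).support :=
  (Walk.mem_support_append_iff p q).2 (Or.inl hx)

lemma path_loop {u : V} {p : G.Walk u u} (hp : p.IsPath) : p = Walk.nil := by
  cases p with
  | nil => rfl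
  | cons r q =>
    exact absurd (Walk.end_mem_support q) ((Walk.cons_isPath_iff r q).1 hp).2

lemma exists_edge_of_mem_support {u v x : V} (p : G.Walk u v) (hl : 0 < p.length)
    (hx : x ∈ p.support) : ∃ e ∈ p.edges, x ∈ e := by
  induction p with
  | nil => simp at hl
  | @cons a b c r q ih =>
    rcases List.mem_cons.1 (Walk.support_cons r q ▸ hx) with h1 | h1
    · exact ⟨s(a, b), by simp [Walk.edges_cons], by simp [h1]⟩
    · rcases Nat.eq_zero_or_pos q.length with hq | hq
      · have hsup : q.support.length = 1 := by rw [Walk.length_support, hq]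
        obtain ⟨y, hy⟩ := List.length_eq_one_iff.1 hsup
        have hxb : x = b := by
          have h2 : b ∈ q.support := Walk.start_mem_support q
          rw [hy] at h1 h2
          simp at h1 h2
          exact h1.trans h2.symm
        exact ⟨s(a, b), by simp [Walk.edges_cons], by simp [hxb]⟩
      · obtain ⟨e, he, hxe⟩ := ih hq h1
        exact ⟨e, by simp [Walk.edges_cons, he], hxe⟩

lemma mem_edge_start {u v : V} {p : G.Walk u v} (hp : p.IsPath) {e : Sym2 V}
    (he : e ∈ p.edges) (hu : u ∈ e) :
    ∃ (x : V) (h : G.Adj u x) (R : G.Walk x v), p = Walk.cons h R ∧ e = s(u, x) := by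
  cases p with
  | nil => simp at he
  | @cons a b c r q =>
    rcases List.mem_cons.1 (Walk.edges_cons r q ▸ he) with h1 | h1
    · exact ⟨b, r, q, rfl, h1⟩
    · exfalso
      obtain ⟨y, hy⟩ := Sym2.mem_iff_exists.1 hu
      subst hy
      exact ((Walk.cons_isPath_iff r q).1 hp).2 (Walk.fst_mem_support_of_mem_edges q h1)

section Cycle

variable {vb : V} {c : G.Walk vb vb}

lemma cyc_tail_eq (hx : x ∈ c.support) :
    c.support.tail = (c.takeUntil x hx).support.tail ++ (c.dropUntil x hx).support.tail := by
  conv_lhs => rw [← Walk.take_spec c hx]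
  rw [Walk.support_append, Walk.support_eq_cons (c.takeUntil x hx)]
  simp

lemma cyc_tail_nodup (hc : c.IsCycle) (hx : x ∈ c.support) :
    ((c.takeUntil x hx).support.tail ++ (c.dropUntil x hx).support.tail).Nodup := by
  rw [← cyc_tail_eq hx]; exact hc.support_nodup

lemma takeUntil_isPath (hc : c.IsCycle) (hx : x ∈ c.support) :
    (c.takeUntil x hx).IsPath := by
  rw [Walk.isPath_def, Walk.support_eq_cons]
  have hnd := cyc_tail_nodup hc hx
  rw [List.nodup_append'] at hnd
  refine List.nodup_cons.2 ⟨?_, hnd.1⟩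
  by_cases hxvb : x = vb
  · subst hxvb
    rw [takeUntil_start]
    simp
  · intro hmem
    have hvbd : vb ∈ (c.dropUntil x hx).support.tail := by
      have h1 : vb ∈ (c.dropUntil x hx).support := Walk.end_mem_support _
      rw [Walk.support_eq_cons] at h1
      rcases List.mem_cons.1 h1 with h2 | h2
      · exact absurd h2.symm hxvb
      · exact h2
    exact hnd.2.2 hmem hvbd

lemma dropUntil_isPath (hc : c.IsCycle) (hx : x ∈ c.support) (hxvb : x ≠ vb) :
    (c.dropUntil x hx).IsPath := by
  rw [Walk.isPath_def, Walk.support_eq_cons]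
  have hnd := cyc_tail_nodup hc hx
  rw [List.nodup_append'] at hnd
  refine List.nodup_cons.2 ⟨?_, hnd.2.1⟩
  intro hmem
  have hxt : x ∈ (c.takeUntil x hx).support.tail := by
    have h1 : x ∈ (c.takeUntil x hx).support := Walk.end_mem_support _
    rw [Walk.support_eq_cons] at h1
    rcases List.mem_cons.1 h1 with h2 | h2
    · exact absurd h2 hxvb
    · exact h2
  exact hnd.2.2 hxt hmem

lemma cyc_edges_split (hx : x ∈ c.support) :
    c.edges = (c.takeUntil x hx).edges ++ (c.dropUntil x hx).edges := by
  conv_lhs => rw [← Walk.take_spec c hx]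
  rw [Walk.edges_append]

lemma wlen'_take_drop (hx : x ∈ c.support) :
    wlen' wt (c.takeUntil x hx) + wlen' wt (c.dropUntil x hx) = wlen' wt c := by
  simp only [wlen'_def]
  rw [cyc_edges_split hx]
  simp

lemma classify (hc : c.IsCycle) :
    ∀ (n : ℕ) {x : V} (S : G.Walk x vb), S.length = n → S.IsPath →
      (∀ e ∈ S.edges, e ∈ c.edges) → ∀ (hx : x ∈ c.support),
      S.edges.toFinset = (c.dropUntil x hx).edges.toFinset ∨
        S.edges.toFinset = (c.takeUntil x hx).edges.toFinset := by
  intro n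
  induction n using Nat.strong_induction_on with
  | _ n ih =>
  intro x S hlen hS hSE hx
  cases S with
  | nil =>
    right
    simp [takeUntil_start]
  | @cons _ y _ h S' =>
    have hxvb : x ≠ vb := by
      intro hh; subst hh
      exact ((Walk.cons_isPath_iff h S').1 hS).2 (Walk.end_mem_support S')
    have he : s(x, y) ∈ c.edges := hSE _ (by simp [Walk.edges_cons])
    have hxe : x ∈ s(x, y) := Sym2.mem_mk_left x y
    have hnd := List.nodup_append'.1 (cyc_tail_nodup hc hx)
    have hSnd : (Walk.cons h S').edges.Nodup := hS.edges_nodup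
    rw [Walk.edges_cons] at hSnd
    have hS'p : S'.IsPath := hS.of_cons
    have hS'E : ∀ e ∈ S'.edges, e ∈ c.edges := fun e he' =>
      hSE e (by simp [Walk.edges_cons, he'])
    have hlen' : S'.length < n := by
      rw [← hlen]; simp [Walk.length_cons]
    rcases List.mem_append.1 ((cyc_edges_split hx ▸ he : _)) with hB | hA
    · -- the edge lies on the takeUntil side
      have hTUp : (c.takeUntil x hx).IsPath := takeUntil_isPath hc hx
      have hPp : (c.takeUntil x hx).reverse.IsPath := hTUp.reverse
      have he' : s(x, y) ∈ (c.takeUntil x hx).reverse.edges := by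
        rw [Walk.edges_reverse]; exact List.mem_reverse.2 hB
      obtain ⟨z, hz, R₂, hPdef, hzeq⟩ := mem_edge_start hPp he' hxe
      have hyz : y = z := by
        rcases Sym2.eq_iff.1 hzeq with ⟨_, h2⟩ | ⟨h1, h2⟩
        · exact h2
        · exact absurd h2.symm h.ne
      subst hyz
      have hR₂p : R₂.IsPath := by
        rw [hPdef] at hPp; exact hPp.of_cons
      have hTUdef : c.takeUntil x hx = R₂.reverse.append (Walk.cons hz.symm Walk.nil) := by
        have h1 := congrArg Walk.reverse hPdef
        rw [Walk.reverse_reverse] at h1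
        rw [h1, Walk.reverse_cons]
      by_cases hyvb : y = vb
      · subst hyvb
        have hR₂ : R₂ = Walk.nil := path_loop hR₂p
        have hS'n : S' = Walk.nil := path_loop hS'p
        subst hR₂ hS'n
        right
        rw [hTUdef]
        simp [Walk.edges_cons, Walk.edges_append, Sym2.eq_swap]
      · have hyA2 : y ∈ R₂.reverse.support := by
          rw [Walk.support_reverse]; exact List.mem_reverse.2 (Walk.start_mem_support R₂)
        have hyc : y ∈ c.support := Walk.support_takeUntil_subset c hx
          (by rw [hTUdef]; exact mem_support_append_left _ hyA2)
        have hA2p : R₂.reverse.IsPath := hR₂p.reverse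
        have hspec : (R₂.reverse.append (Walk.cons hz.symm Walk.nil)).append
            (c.dropUntil x hx) = c := by
          rw [← hTUdef]; exact Walk.take_spec c hx
        have hyL : y ∈ (R₂.reverse.append (Walk.cons hz.symm Walk.nil)).support :=
          mem_support_append_left _ hyA2
        have htUy : c.takeUntil y hyc = R₂.reverse := by
          rw [takeUntil_congr hspec.symm hyc,
            takeUntil_append_left _ _ hyL,
            takeUntil_append_left _ _ hyA2,
            takeUntil_end _ hA2p]
        have hdUy : (c.dropUntil y hyc).edges
            = s(y, x) :: (c.dropUntil x hx).edges := by
          rw [dropUntil_congr hspec.symm hyc,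
            dropUntil_append_left _ _ hyL,
            dropUntil_append_left _ _ hyA2,
            dropUntil_end _ hA2p]
          simp [Walk.edges_append, Walk.edges_cons]
        rcases ih S'.length hlen' S' rfl hS'p hS'E hyc with hI | hI
        · exfalso
          have hxy : s(x, y) ∈ S'.edges := by
            have h2 : s(x, y) ∈ (c.dropUntil y hyc).edges.toFinset := by
              rw [hdUy]; simp [Sym2.eq_swap]
            rw [← hI] at h2; exact List.mem_toFinset.1 h2
          exact (List.nodup_cons.1 hSnd).1 hxy
        · right
          rw [htUy] at hI
          rw [hTUdef]
          rw [Walk.edges_cons, Walk.edges_append, Walk.edges_cons]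
          simp only [List.toFinset_cons, List.toFinset_append]
          rw [hI]
          rw [Sym2.eq_swap (a := y)]
          ext e
          simp [or_comm]
    · -- the edge lies on the dropUntil side
      have hDUp : (c.dropUntil x hx).IsPath := dropUntil_isPath hc hx hxvb
      obtain ⟨z, hz, R, hRdef, hzeq⟩ := mem_edge_start hDUp hA hxe
      have hyz : y = z := by
        rcases Sym2.eq_iff.1 hzeq with ⟨_, h2⟩ | ⟨h1, h2⟩
        · exact h2
        · exact absurd h2.symm h.ne
      subst hyz
      have hRp : R.IsPath := by
        rw [hRdef] at hDUp; exact hDUp.of_cons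
      by_cases hyvb : y = vb
      · subst hyvb
        have hRn : R = Walk.nil := path_loop hRp
        have hS'n : S' = Walk.nil := path_loop hS'p
        subst hRn hS'n
        left
        rw [hRdef]
      · have hyR : y ∈ R.support := Walk.start_mem_support R
        have hyDt : y ∈ (c.dropUntil x hx).support.tail := by
          rw [hRdef, Walk.support_cons]; exact hyR
        have hyTU : y ∉ (c.takeUntil x hx).support := by
          rw [Walk.support_eq_cons]
          intro hmem
          rcases List.mem_cons.1 hmem with h1 | h1
          · exact hyvb h1
          · exact hnd.2.2 h1 hyDt
        have hyc : y ∈ c.support := Walk.support_dropUntil_subset c hx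
          (by rw [hRdef, Walk.support_cons]; exact List.mem_cons_of_mem _ hyR)
        have hspec : (c.takeUntil x hx).append (Walk.cons hz R) = c := by
          rw [← hRdef]; exact Walk.take_spec c hx
        have hyCons : y ∈ (Walk.cons hz R).support := by
          rw [Walk.support_cons]; exact List.mem_cons_of_mem _ hyR
        have hdUy : c.dropUntil y hyc = R := by
          rw [dropUntil_congr hspec.symm hyc,
            dropUntil_append_right _ _ hyTU hyCons,
            dropUntil_cons_of_ne hz R _ h.ne hyR,
            dropUntil_start]
        have htUy : (c.takeUntil y hyc).edges
            = (c.takeUntil x hx).edges ++ [s(x, y)] := by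
          rw [takeUntil_congr hspec.symm hyc,
            takeUntil_append_right _ _ hyTU hyCons,
            takeUntil_cons_of_ne hz R _ h.ne hyR,
            takeUntil_start]
          simp [Walk.edges_append, Walk.edges_cons]
        rcases ih S'.length hlen' S' rfl hS'p hS'E hyc with hI | hI
        · left
          rw [hdUy] at hI
          rw [hRdef]
          rw [Walk.edges_cons, Walk.edges_cons]
          simp only [List.toFinset_cons]
          rw [hI]
        · exfalso
          have hxy : s(x, y) ∈ S'.edges := by
            have h2 : s(x, y) ∈ (c.takeUntil y hyc).edges.toFinset := by
              rw [htUy]; simp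
            rw [← hI] at h2; exact List.mem_toFinset.1 h2
          exact (List.nodup_cons.1 hSnd).1 hxy

lemma wlen'_pos_of_ne {G : SimpleGraph V} {wt : Sym2 V → ℕ} (hw : ∀ e ∈ G.edgeSet, 0 < wt e)
    {u v : V} (p : G.Walk u v) (h : u ≠ v) : 0 < wlen' wt p :=
  Nat.pos_of_ne_zero fun h0 => h (eq_of_wlen'_zero hw p h0)

lemma t_split (hw : ∀ e ∈ G.edgeSet, 0 < wt e) {a b : V} (hb : b ∈ c.support)
    (hab : a ∈ (c.takeUntil b hb).support) (ha : a ∈ c.support) :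
    c.takeUntil a ha = (c.takeUntil b hb).takeUntil a hab := by
  rw [takeUntil_congr (Walk.take_spec c hb).symm ha,
    takeUntil_append_left _ _ hab]

lemma t_le (hw : ∀ e ∈ G.edgeSet, 0 < wt e) {a b : V} (hb : b ∈ c.support)
    (hab : a ∈ (c.takeUntil b hb).support) (ha : a ∈ c.support) :
    wlen' wt (c.takeUntil a ha) + wlen' wt ((c.takeUntil b hb).dropUntil a hab)
      = wlen' wt (c.takeUntil b hb) := by
  rw [t_split hw hb hab ha]
  conv_rhs => rw [← Walk.take_spec (c.takeUntil b hb) hab]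
  rw [wlen'_append]

lemma t_lt (hw : ∀ e ∈ G.edgeSet, 0 < wt e) {a b : V} (hb : b ∈ c.support)
    (hab : a ∈ (c.takeUntil b hb).support) (ha : a ∈ c.support) (hne : a ≠ b) :
    wlen' wt (c.takeUntil a ha) < wlen' wt (c.takeUntil b hb) := by
  have := t_le hw hb hab ha
  have hpos := wlen'_pos_of_ne hw ((c.takeUntil b hb).dropUntil a hab) hne
  omega

lemma mem_or_mem {a b : V} (ha : a ∈ c.support) (hb : b ∈ c.support) :
    a ∈ (c.takeUntil b hb).support ∨ b ∈ (c.takeUntil a ha).support := by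
  by_cases h : a ∈ (c.takeUntil b hb).support
  · exact Or.inl h
  · right
    have ha' : a ∈ ((c.takeUntil b hb).append (c.dropUntil b hb)).support := by
      rw [Walk.take_spec]; exact ha
    have haD : a ∈ (c.dropUntil b hb).support := by
      rcases (Walk.mem_support_append_iff _ _).1 ha' with h1 | h1
      · exact absurd h1 h
      · exact h1
    rw [takeUntil_congr (Walk.take_spec c hb).symm ha,
      takeUntil_append_right _ _ h haD]
    exact mem_support_append_left _ (Walk.end_mem_support _)

lemma t_inj (hw : ∀ e ∈ G.edgeSet, 0 < wt e) {a b : V} (ha : a ∈ c.support)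
    (hb : b ∈ c.support)
    (h : wlen' wt (c.takeUntil a ha) = wlen' wt (c.takeUntil b hb)) : a = b := by
  by_contra hne
  rcases mem_or_mem ha hb with h1 | h1
  · exact absurd h (Nat.ne_of_lt (t_lt hw hb h1 ha hne))
  · exact absurd h.symm (Nat.ne_of_lt (t_lt hw ha h1 hb (Ne.symm hne)))

lemma between (hw : ∀ e ∈ G.edgeSet, 0 < wt e) {a b x : V} (ha : a ∈ c.support)
    (hb : b ∈ c.support) (hx : x ∈ c.support) (hab : a ∈ (c.takeUntil b hb).support)
    (h1 : wlen' wt (c.takeUntil a ha) < wlen' wt (c.takeUntil x hx))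
    (h2 : wlen' wt (c.takeUntil x hx) < wlen' wt (c.takeUntil b hb)) :
    x ∈ ((c.takeUntil b hb).dropUntil a hab).support := by
  have hxb : x ∈ (c.takeUntil b hb).support := by
    rcases mem_or_mem hx hb with h3 | h3
    · exact h3
    · exfalso
      have := t_le hw hx h3 hb
      omega
  have hsup : (c.takeUntil b hb).support
      = ((c.takeUntil b hb).takeUntil a hab).support
        ++ ((c.takeUntil b hb).dropUntil a hab).support.tail := by
    conv_lhs => rw [← Walk.take_spec (c.takeUntil b hb) hab]
    rw [Walk.support_append]
  rw [hsup] at hxb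
  rcases List.mem_append.1 hxb with h3 | h3
  · exfalso
    rw [← t_split hw hb hab ha] at h3
    have := t_le hw ha h3 hx
    omega
  · rw [Walk.support_eq_cons]
    exact List.mem_cons_of_mem _ h3

lemma core (hw : ∀ e ∈ G.edgeSet, 0 < wt e) (hc : c.IsCycle)
    {u : V} {o : G.Walk u u} (hoc : ∀ e, e ∈ c.edges ↔ e ∈ o.edges)
    {a b : V} (Q : G.Walk a b) (hQp : Q.IsPath) (hQE : ∀ e ∈ Q.edges, e ∈ c.edges)
    (h0 : 0 < Q.length) (hvbQ : vb ∉ Q.support) (havb : a ≠ vb) (hbvb : b ≠ vb)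
    (hb : b ∈ c.support) (hab : a ∈ (c.takeUntil b hb).support) (ha : a ∈ c.support)
    (keya : ∀ S : G.Walk a vb, S.IsPath → (∀ e ∈ S.edges, e ∈ o.edges) →
      (∀ e ∈ Q.edges, e ∈ S.edges) →
      ∃ S' : G.Walk a vb, S'.IsPath ∧ (∀ e ∈ S'.edges, e ∈ o.edges) ∧
        wlen' wt S' < wlen' wt S)
    (keyb : ∀ S : G.Walk b vb, S.IsPath → (∀ e ∈ S.edges, e ∈ o.edges) →
      (∀ e ∈ Q.edges, e ∈ S.edges) →
      ∃ S' : G.Walk b vb, S'.IsPath ∧ (∀ e ∈ S'.edges, e ∈ o.edges) ∧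
        wlen' wt S' < wlen' wt S) :
    Q.edges.toFinset = ((c.takeUntil b hb).dropUntil a hab).edges.toFinset ∧
    2 * wlen' wt (c.takeUntil a ha) < wlen' wt c ∧
    wlen' wt c < 2 * wlen' wt (c.takeUntil b hb) := by
  have hne : a ≠ b := by
    intro hh; subst hh
    rw [path_loop hQp] at h0; simp at h0
  have hnd := List.nodup_append'.1 (cyc_tail_nodup hc hb)
  have haTt : a ∈ (c.takeUntil b hb).support.tail := by
    have := Walk.support_eq_cons (c.takeUntil b hb) ▸ hab
    rcases List.mem_cons.1 this with h1 | h1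
    · exact absurd h1 havb
    · exact h1
  have haD : a ∉ (c.dropUntil b hb).support := by
    rw [Walk.support_eq_cons]
    intro hmem
    rcases List.mem_cons.1 hmem with h1 | h1
    · exact hne h1
    · exact hnd.2.2 haTt h1
  have hcb : (c.rotate b hb).IsCycle := hc.rotate hb
  have hrot : c.rotate b hb = (c.dropUntil b hb).append (c.takeUntil b hb) := rfl
  have hacb : a ∈ (c.rotate b hb).support := by
    rw [hrot, Walk.mem_support_append_iff]; exact Or.inr hab
  have hQEcb : ∀ e ∈ Q.edges, e ∈ (c.rotate b hb).edges := fun e he =>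
    (Walk.rotate_edges c b hb).mem_iff.2 (hQE e he)
  have hclass := classify hcb Q.length Q rfl hQp hQEcb hacb
  have hdrop : (c.rotate b hb).dropUntil a hacb = (c.takeUntil b hb).dropUntil a hab := by
    rw [dropUntil_congr hrot hacb, dropUntil_append_right _ _ haD hab]
  have hseg : Q.edges.toFinset
      = ((c.takeUntil b hb).dropUntil a hab).edges.toFinset := by
    rcases hclass with h1 | h1
    · rw [h1, hdrop]
    · exfalso
      have htake : (c.rotate b hb).takeUntil a hacb
          = (c.dropUntil b hb).append ((c.takeUntil b hb).takeUntil a hab) := by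
        rw [takeUntil_congr hrot hacb, takeUntil_append_right _ _ haD hab]
      have hDlen : 0 < (c.dropUntil b hb).length :=
        Nat.pos_of_ne_zero fun hz => hbvb (Walk.eq_of_length_eq_zero hz)
      obtain ⟨e', he', hvbe⟩ := exists_edge_of_mem_support (c.dropUntil b hb) hDlen
        (Walk.end_mem_support _)
      have he'Q : e' ∈ Q.edges := by
        have h2 : e' ∈ ((c.rotate b hb).takeUntil a hacb).edges := by
          rw [htake, Walk.edges_append]
          exact List.mem_append.2 (Or.inl he')
        have h3 : e' ∈ Q.edges.toFinset := by
          rw [h1]; exact List.mem_toFinset.2 h2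
        exact List.mem_toFinset.1 h3
      obtain ⟨z, hz⟩ := Sym2.mem_iff_exists.1 hvbe
      subst hz
      exact hvbQ (Walk.fst_mem_support_of_mem_edges Q he'Q)
  refine ⟨hseg, ?_, ?_⟩
  · have hSp : (c.dropUntil a ha).IsPath := dropUntil_isPath hc ha havb
    have hMnd : ((c.takeUntil b hb).dropUntil a hab).edges.Nodup :=
      ((takeUntil_isPath hc hb).dropUntil hab).edges_nodup
    have hq : wlen' wt Q = wlen' wt ((c.takeUntil b hb).dropUntil a hab) :=
      wlen'_congr hQp.edges_nodup hMnd hseg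
    have htb : wlen' wt (c.takeUntil a ha)
        + wlen' wt ((c.takeUntil b hb).dropUntil a hab)
        = wlen' wt (c.takeUntil b hb) := t_le hw hb hab ha
    have hLa := wlen'_take_drop (wt := wt) ha
    have hLb := wlen'_take_drop (wt := wt) hb
    have hdUa : c.dropUntil a ha
        = ((c.takeUntil b hb).dropUntil a hab).append (c.dropUntil b hb) := by
      have hsp : (((c.takeUntil b hb).takeUntil a hab).append
          (((c.takeUntil b hb).dropUntil a hab).append (c.dropUntil b hb))) = c := by
        rw [Walk.append_assoc, Walk.take_spec, Walk.take_spec]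
      have haT : a ∈ ((c.takeUntil b hb).takeUntil a hab).support :=
        Walk.end_mem_support _
      rw [dropUntil_congr hsp.symm ha, dropUntil_append_left _ _ haT,
        dropUntil_end _ ((takeUntil_isPath hc hb).takeUntil hab), Walk.nil_append]
    have hSE : ∀ e ∈ (c.dropUntil a ha).edges, e ∈ o.edges := fun e he =>
      (hoc e).1 (Walk.edges_dropUntil_subset c ha he)
    have hSQ : ∀ e ∈ Q.edges, e ∈ (c.dropUntil a ha).edges := by
      intro e he
      have h2 : e ∈ ((c.takeUntil b hb).dropUntil a hab).edges :=
        List.mem_toFinset.1 (hseg ▸ List.mem_toFinset.2 he)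
      rw [hdUa, Walk.edges_append]
      exact List.mem_append.2 (Or.inl h2)
    obtain ⟨S', hS'p, hS'E, hS'lt⟩ := keya (c.dropUntil a ha) hSp hSE hSQ
    have hS'c : ∀ e ∈ S'.edges, e ∈ c.edges := fun e he => (hoc e).2 (hS'E e he)
    rcases classify hc S'.length S' rfl hS'p hS'c ha with h1 | h1
    · exfalso
      have := wlen'_congr (wt := wt) hS'p.edges_nodup
        (dropUntil_isPath hc ha havb).edges_nodup h1
      omega
    · have := wlen'_congr (wt := wt) hS'p.edges_nodup
        (takeUntil_isPath hc ha).edges_nodup h1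
      omega
  · have hSp : ((c.takeUntil b hb).reverse).IsPath := (takeUntil_isPath hc hb).reverse
    have hMnd : ((c.takeUntil b hb).dropUntil a hab).edges.Nodup :=
      ((takeUntil_isPath hc hb).dropUntil hab).edges_nodup
    have hq : wlen' wt Q = wlen' wt ((c.takeUntil b hb).dropUntil a hab) :=
      wlen'_congr hQp.edges_nodup hMnd hseg
    have hLb := wlen'_take_drop (wt := wt) hb
    have hSE : ∀ e ∈ (c.takeUntil b hb).reverse.edges, e ∈ o.edges := by
      intro e he
      rw [Walk.edges_reverse, List.mem_reverse] at he
      exact (hoc e).1 (Walk.edges_takeUntil_subset c hb he)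
    have hSQ : ∀ e ∈ Q.edges, e ∈ (c.takeUntil b hb).reverse.edges := by
      intro e he
      have h2 : e ∈ ((c.takeUntil b hb).dropUntil a hab).edges :=
        List.mem_toFinset.1 (hseg ▸ List.mem_toFinset.2 he)
      rw [Walk.edges_reverse, List.mem_reverse]
      exact Walk.edges_dropUntil_subset _ hab h2
    obtain ⟨S', hS'p, hS'E, hS'lt⟩ := keyb ((c.takeUntil b hb).reverse) hSp hSE hSQ
    rw [wlen'_reverse] at hS'lt
    have hS'c : ∀ e ∈ S'.edges, e ∈ c.edges := fun e he => (hoc e).2 (hS'E e he)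
    rcases classify hc S'.length S' rfl hS'p hS'c hb with h1 | h1
    · have := wlen'_congr (wt := wt) hS'p.edges_nodup
        (dropUntil_isPath hc hb hbvb).edges_nodup h1
      omega
    · exfalso
      have := wlen'_congr (wt := wt) hS'p.edges_nodup
        (takeUntil_isPath hc hb).edges_nodup h1
      omega

end Cycle

variable {r : ℕ∞}

lemma norm {θ : Theta G wt r} (hw : ∀ e ∈ G.edgeSet, 0 < wt e) {vb : V}
    (hvb : θ.IsBranch vb) {c : G.Walk vb vb} (hc : c.IsCycle)
    {u : V} {o : G.Walk u u} (hoc : ∀ e, e ∈ c.edges ↔ e ∈ o.edges)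
    {a b : V} (Q : G.Walk a b) (hbr : θ.IsBridgeArc o Q)
    (hnp : ¬ θ.PrimaryBridge o vb Q) :
    ∃ (a' b' : V) (ha' : a' ∈ c.support) (hb' : b' ∈ c.support)
      (hab : a' ∈ (c.takeUntil b' hb').support),
      a' ∈ θ.support ∧ b' ∈ θ.support ∧
      (∀ z ∈ Q.support, z ≠ a' → z ≠ b' → z ∉ θ.support) ∧
      Q.edges.toFinset = ((c.takeUntil b' hb').dropUntil a' hab).edges.toFinset ∧
      2 * wlen' wt (c.takeUntil a' ha') < wlen' wt c ∧
      wlen' wt c < 2 * wlen' wt (c.takeUntil b' hb') := by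
  obtain ⟨⟨⟨hQp, hQE⟩, hlen, haθ, hbθ, hint⟩, i, j, hij, hia, hjb⟩ := hbr
  have havb : a ≠ vb := by
    rcases hvb with h | h
    · subst h; exact hia.2.1
    · subst h; exact hia.2.2
  have hbvb : b ≠ vb := by
    rcases hvb with h | h
    · subst h; exact hjb.2.1
    · subst h; exact hjb.2.2
  have hvbθ : vb ∈ θ.support := by
    rcases hvb with h | h
    · subst h; exact ⟨0, Walk.start_mem_support _⟩
    · subst h; exact ⟨0, Walk.end_mem_support _⟩
  have hvbQ : vb ∉ Q.support := fun hmem =>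
    hint vb hmem (Ne.symm havb) (Ne.symm hbvb) hvbθ
  have hQEc : ∀ e ∈ Q.edges, e ∈ c.edges := fun e he => (hoc e).2 (hQE e he)
  have hac : a ∈ c.support := by
    obtain ⟨e, he, hae⟩ := exists_edge_of_mem_support Q hlen (Walk.start_mem_support Q)
    obtain ⟨z, hz⟩ := Sym2.mem_iff_exists.1 hae
    subst hz
    exact Walk.fst_mem_support_of_mem_edges c (hQEc _ he)
  have hbc : b ∈ c.support := by
    obtain ⟨e, he, hae⟩ := exists_edge_of_mem_support Q hlen (Walk.end_mem_support Q)
    obtain ⟨z, hz⟩ := Sym2.mem_iff_exists.1 hae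
    subst hz
    exact Walk.fst_mem_support_of_mem_edges c (hQEc _ he)
  have key : ∀ (x : V), (x = a ∨ x = b) → ∀ S : G.Walk x vb, S.IsPath →
      (∀ e ∈ S.edges, e ∈ o.edges) → (∀ e ∈ Q.edges, e ∈ S.edges) →
      ∃ S' : G.Walk x vb, S'.IsPath ∧ (∀ e ∈ S'.edges, e ∈ o.edges) ∧
        wlen' wt S' < wlen' wt S := by
    intro x hxab S hSp hSE hSQ
    by_contra hcon
    push_neg at hcon
    apply hnp
    refine ⟨x, hxab, S, ⟨hSp, hSE⟩, ?_, hSQ⟩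
    intro S' hS'
    exact hcon S' hS'.1 hS'.2
  rcases mem_or_mem hac hbc with hor | hor
  · obtain ⟨hseg, h1, h2⟩ := core hw hc hoc Q hQp hQEc hlen hvbQ havb hbvb hbc hor hac
      (key a (Or.inl rfl)) (key b (Or.inr rfl))
    exact ⟨a, b, hac, hbc, hor, ⟨i, hia.1⟩, ⟨j, hjb.1⟩, hint, hseg, h1, h2⟩
  · have hQrE : ∀ e ∈ Q.reverse.edges, e ∈ c.edges := by
      intro e he; rw [Walk.edges_reverse, List.mem_reverse] at he; exact hQEc e he
    have h0r : 0 < Q.reverse.length := by rw [Walk.length_reverse]; exact hlen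
    have hvbQr : vb ∉ Q.reverse.support := by
      rw [Walk.support_reverse]; exact fun h => hvbQ (List.mem_reverse.1 h)
    obtain ⟨hseg, h1, h2⟩ := core hw hc hoc Q.reverse hQp.reverse hQrE h0r hvbQr
      hbvb havb hac hor hbc
      (fun S hSp hSE hSQ => key b (Or.inr rfl) S hSp hSE
        (fun e he => hSQ e (by rw [Walk.edges_reverse, List.mem_reverse]; exact he)))
      (fun S hSp hSE hSQ => key a (Or.inl rfl) S hSp hSE
        (fun e he => hSQ e (by rw [Walk.edges_reverse, List.mem_reverse]; exact he)))
    refine ⟨b, a, hbc, hac, hor, ⟨j, hjb.1⟩, ⟨i, hia.1⟩, ?_, ?_, h1, h2⟩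
    · exact fun z hz hzb hza => hint z hz hza hzb
    · rw [← hseg, Walk.edges_reverse, List.toFinset_reverse]

lemma finseg {vb : V} {c : G.Walk vb vb} (hw : ∀ e ∈ G.edgeSet, 0 < wt e)
    (hc : c.IsCycle) {T : Set V}
    {a₁ b₁ a₂ b₂ : V} (ha₁ : a₁ ∈ c.support) (hb₁ : b₁ ∈ c.support)
    (hab₁ : a₁ ∈ (c.takeUntil b₁ hb₁).support)
    (ha₂ : a₂ ∈ c.support) (hb₂ : b₂ ∈ c.support)
    (hab₂ : a₂ ∈ (c.takeUntil b₂ hb₂).support)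
    (haT₂ : a₂ ∈ T) (hbT₁ : b₁ ∈ T) (hbT₂ : b₂ ∈ T)
    (hT₁ : ∀ z ∈ ((c.takeUntil b₁ hb₁).dropUntil a₁ hab₁).support,
      z ≠ a₁ → z ≠ b₁ → z ∉ T)
    (hT₂ : ∀ z ∈ ((c.takeUntil b₂ hb₂).dropUntil a₂ hab₂).support,
      z ≠ a₂ → z ≠ b₂ → z ∉ T)
    (hn₁ : 2 * wlen' wt (c.takeUntil a₁ ha₁) < wlen' wt c)
    (hn₁' : wlen' wt c < 2 * wlen' wt (c.takeUntil b₁ hb₁))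
    (hn₂ : 2 * wlen' wt (c.takeUntil a₂ ha₂) < wlen' wt c)
    (hn₂' : wlen' wt c < 2 * wlen' wt (c.takeUntil b₂ hb₂))
    (hle : wlen' wt (c.takeUntil a₁ ha₁) ≤ wlen' wt (c.takeUntil a₂ ha₂)) :
    ((c.takeUntil b₁ hb₁).dropUntil a₁ hab₁).edges.toFinset
      = ((c.takeUntil b₂ hb₂).dropUntil a₂ hab₂).edges.toFinset := by
  rcases Nat.lt_or_ge (wlen' wt (c.takeUntil a₁ ha₁)) (wlen' wt (c.takeUntil a₂ ha₂))
    with hlt | hge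
  · exfalso
    have h2 : wlen' wt (c.takeUntil a₂ ha₂) < wlen' wt (c.takeUntil b₁ hb₁) := by omega
    have hmem := between hw ha₁ hb₁ ha₂ hab₁ hlt h2
    have hna : a₂ ≠ a₁ := fun h => by subst h; exact (Nat.ne_of_lt hlt) rfl
    have hnb : a₂ ≠ b₁ := fun h => by subst h; exact (Nat.ne_of_lt h2) rfl
    exact hT₁ a₂ hmem hna hnb haT₂
  · have heq := t_inj hw ha₁ ha₂ (Nat.le_antisymm hle hge)
    subst heq
    rcases Nat.lt_trichotomy (wlen' wt (c.takeUntil b₁ hb₁))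
      (wlen' wt (c.takeUntil b₂ hb₂)) with hbb | hbb | hbb
    · exfalso
      have h1 : wlen' wt (c.takeUntil a₁ ha₂) < wlen' wt (c.takeUntil b₁ hb₁) := by
        have hre : wlen' wt (c.takeUntil a₁ ha₁) = wlen' wt (c.takeUntil a₁ ha₂) := rfl
        omega
      have hmem := between hw ha₂ hb₂ hb₁ hab₂ h1 hbb
      have hna : b₁ ≠ a₁ := fun h => by subst h; exact (Nat.ne_of_lt h1) rfl
      have hnb : b₁ ≠ b₂ := fun h => by subst h; exact (Nat.ne_of_lt hbb) rfl
      exact hT₂ b₁ hmem hna hnb hbT₁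
    · have heq2 := t_inj hw hb₁ hb₂ hbb
      subst heq2
      rfl
    · exfalso
      have h1 : wlen' wt (c.takeUntil a₁ ha₁) < wlen' wt (c.takeUntil b₂ hb₂) := by
        have hre : wlen' wt (c.takeUntil a₁ ha₁) = wlen' wt (c.takeUntil a₁ ha₂) := rfl
        omega
      have hmem := between hw ha₁ hb₁ hb₂ hab₁ h1 hbb
      have hna : b₂ ≠ a₁ := fun h => by subst h; exact (Nat.ne_of_lt h1) rfl
      have hnb : b₂ ≠ b₁ := fun h => by subst h; exact (Nat.ne_of_lt hbb) rfl
      exact hT₁ b₂ hmem hna hnb hbT₂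

end Aux

end LocalWheels

/-- Let `θ` be a theta graph of parameter `r` in `G` and `o` a cycle of
length at most `r` containing a branching vertex `vb` of `θ`. Then at most one `θ`-bridge
included in `o` is secondary (not primary): there cannot be two secondary bridges. -/
theorem LocalWheels.stmt14 {V : Type*} [Fintype V] [DecidableEq V]
    (G : SimpleGraph V) (wt : Sym2 V → ℕ) (hw : LocalWheels.WeightPos G wt) (r : ℕ∞)
    (θ : LocalWheels.Theta G wt r) (u : V) (o : G.Walk u u) (ho : o.IsCycle)
    (hor : (LocalWheels.wlen wt o : ℕ∞) ≤ r)
    (vb : V) (hvb : θ.IsBranch vb) (hvbo : vb ∈ o.support) :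
    ∀ (a₁ b₁ : V) (Q₁ : G.Walk a₁ b₁) (a₂ b₂ : V) (Q₂ : G.Walk a₂ b₂),
      θ.IsBridgeArc o Q₁ → θ.IsBridgeArc o Q₂ →
      ¬ θ.PrimaryBridge o vb Q₁ → ¬ θ.PrimaryBridge o vb Q₂ →
      {e | e ∈ Q₁.edges} = {e | e ∈ Q₂.edges} := by
  intro a₁ b₁ Q₁ a₂ b₂ Q₂ hbr₁ hbr₂ hnp₁ hnp₂
  classical
  have hc : (o.rotate vb hvbo).IsCycle := ho.rotate hvbo
  have hoc : ∀ e, e ∈ (o.rotate vb hvbo).edges ↔ e ∈ o.edges := fun e =>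
    (SimpleGraph.Walk.rotate_edges o vb hvbo).mem_iff
  obtain ⟨a₁', b₁', ha₁, hb₁, hab₁, haT₁, hbT₁, hint₁, hseg₁, hn₁, hn₁'⟩ :=
    Aux.norm hw hvb hc hoc Q₁ hbr₁ hnp₁
  obtain ⟨a₂', b₂', ha₂, hb₂, hab₂, haT₂, hbT₂, hint₂, hseg₂, hn₂, hn₂'⟩ :=
    Aux.norm hw hvb hc hoc Q₂ hbr₂ hnp₂
  have hT₁ : ∀ z ∈ (((o.rotate vb hvbo).takeUntil b₁' hb₁).dropUntil a₁' hab₁).support,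
      z ≠ a₁' → z ≠ b₁' → z ∉ θ.support := by
    intro z hz hza hzb
    have hne : a₁' ≠ b₁' := fun h => by
      subst h
      have hre : Aux.wlen' wt ((o.rotate vb hvbo).takeUntil a₁' ha₁)
          = Aux.wlen' wt ((o.rotate vb hvbo).takeUntil a₁' hb₁) := rfl
      omega
    have hlen : 0 < (((o.rotate vb hvbo).takeUntil b₁' hb₁).dropUntil a₁' hab₁).length :=
      Nat.pos_of_ne_zero fun h => hne (SimpleGraph.Walk.eq_of_length_eq_zero h)
    obtain ⟨e, he, hze⟩ := Aux.exists_edge_of_mem_support _ hlen hz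
    have heQ : e ∈ Q₁.edges := by
      have h2 := List.mem_toFinset.2 he
      rw [← hseg₁] at h2
      exact List.mem_toFinset.1 h2
    obtain ⟨y, hy⟩ := Sym2.mem_iff_exists.1 hze
    subst hy
    exact hint₁ z (SimpleGraph.Walk.fst_mem_support_of_mem_edges Q₁ heQ) hza hzb
  have hT₂ : ∀ z ∈ (((o.rotate vb hvbo).takeUntil b₂' hb₂).dropUntil a₂' hab₂).support,
      z ≠ a₂' → z ≠ b₂' → z ∉ θ.support := by
    intro z hz hza hzb
    have hne : a₂' ≠ b₂' := fun h => by
      subst h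
      have hre : Aux.wlen' wt ((o.rotate vb hvbo).takeUntil a₂' ha₂)
          = Aux.wlen' wt ((o.rotate vb hvbo).takeUntil a₂' hb₂) := rfl
      omega
    have hlen : 0 < (((o.rotate vb hvbo).takeUntil b₂' hb₂).dropUntil a₂' hab₂).length :=
      Nat.pos_of_ne_zero fun h => hne (SimpleGraph.Walk.eq_of_length_eq_zero h)
    obtain ⟨e, he, hze⟩ := Aux.exists_edge_of_mem_support _ hlen hz
    have heQ : e ∈ Q₂.edges := by
      have h2 := List.mem_toFinset.2 he
      rw [← hseg₂] at h2
      exact List.mem_toFinset.1 h2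
    obtain ⟨y, hy⟩ := Sym2.mem_iff_exists.1 hze
    subst hy
    exact hint₂ z (SimpleGraph.Walk.fst_mem_support_of_mem_edges Q₂ heQ) hza hzb
  have hwpos : ∀ e ∈ G.edgeSet, 0 < wt e := hw
  have key : Q₁.edges.toFinset = Q₂.edges.toFinset := by
    rcases Nat.le_total (Aux.wlen' wt ((o.rotate vb hvbo).takeUntil a₁' ha₁))
      (Aux.wlen' wt ((o.rotate vb hvbo).takeUntil a₂' ha₂)) with hle | hle
    · rw [hseg₁, hseg₂]
      exact Aux.finseg hwpos hc ha₁ hb₁ hab₁ ha₂ hb₂ hab₂ haT₂ hbT₁ hbT₂ hT₁ hT₂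
        hn₁ hn₁' hn₂ hn₂' hle
    · rw [hseg₁, hseg₂]
      exact (Aux.finseg hwpos hc ha₂ hb₂ hab₂ ha₁ hb₁ hab₁ haT₁ hbT₂ hbT₁ hT₂ hT₁
        hn₂ hn₂' hn₁ hn₁' hle).symm
  ext e
  simp only [Set.mem_setOf_eq, ← List.mem_toFinset, key]
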